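/- Let D > 0, let l : ℝ → ℝ be twice continuously differentiable and 1-periodic with l(s) > 0 for all s, and let a : ℝ → ℝ be twice continuously differentiable and 1-periodic. For ω > 0 set T = 2π/ω, L(t) = l(ωt/(2π)) and A(t) = a(ωt/(2π)), and define Q̲(t) = −min_{0 ≤ η ≤ 1} (η² L''(t) L(t)/2 + η A''(t) L(t)). Then (1/T)∫₀^T (Dπ²/L(t)² + A'(t)²/(4D) + Q̲(t)/(2D)) dt converges to ∫₀¹ Dπ²/l(s)² ds as ω → 0⁺. Consequently, for any constants β̂ and r₂ with r₂ > β̂ + ∫₀¹ Dπ²/l(s)² ds, one has r₂ ≥ β̂ + (1/T)∫₀^T (Dπ²/L(t)² + A'(t)²/(4D) + Q̲(t)/(2D)) dt for all sufficiently small ω > 0. -/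

import Mathlib

open Set Real Filter Pointwise

noncomputable def MMf (p : ℝ × ℝ) : ℝ :=
  sInf ((fun η : ℝ => η ^ 2 * p.1 / 2 + η * p.2) '' Icc (0:ℝ) 1)

lemma MMset_nonempty (p : ℝ × ℝ) :
    ((fun η : ℝ => η ^ 2 * p.1 / 2 + η * p.2) '' Icc (0:ℝ) 1).Nonempty :=
  ⟨_, ⟨0, by simp, rfl⟩⟩

lemma quad_bound (u v η : ℝ) (h0 : 0 ≤ η) (h1 : η ≤ 1) :
    -(|u| / 2 + |v|) ≤ η ^ 2 * u / 2 + η * v := by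
  have e1 : η ^ 2 ≤ 1 := by nlinarith
  have e2 : η ^ 2 * (-|u|) ≤ η ^ 2 * u :=
    mul_le_mul_of_nonneg_left (neg_abs_le u) (sq_nonneg η)
  have e3 : η * (-|v|) ≤ η * v := mul_le_mul_of_nonneg_left (neg_abs_le v) h0
  have e4 : -|u| ≤ η ^ 2 * (-|u|) := by nlinarith [abs_nonneg u, sq_nonneg η]
  have e5 : -|v| ≤ η * (-|v|) := by nlinarith [abs_nonneg v]
  linarith

lemma MMset_bddBelow (p : ℝ × ℝ) :
    BddBelow ((fun η : ℝ => η ^ 2 * p.1 / 2 + η * p.2) '' Icc (0:ℝ) 1) := by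
  refine ⟨-(|p.1| / 2 + |p.2|), ?_⟩
  rintro x ⟨η, ⟨h0, h1⟩, rfl⟩
  exact quad_bound p.1 p.2 η h0 h1

lemma MMf_le (p q : ℝ × ℝ) :
    MMf p ≤ MMf q + (|p.1 - q.1| / 2 + |p.2 - q.2|) := by
  have h : MMf p - (|p.1 - q.1| / 2 + |p.2 - q.2|) ≤ MMf q := by
    refine le_csInf (MMset_nonempty q) ?_
    rintro b ⟨η, ⟨h0, h1⟩, rfl⟩
    have h2 : MMf p ≤ η ^ 2 * p.1 / 2 + η * p.2 :=
      csInf_le (MMset_bddBelow p) ⟨η, ⟨h0, h1⟩, rfl⟩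
    have h3 := quad_bound (q.1 - p.1) (q.2 - p.2) η h0 h1
    rw [abs_sub_comm q.1 p.1, abs_sub_comm q.2 p.2] at h3
    show MMf p - (|p.1 - q.1| / 2 + |p.2 - q.2|) ≤ η ^ 2 * q.1 / 2 + η * q.2
    linarith
  linarith

lemma MMf_continuous : Continuous MMf := by
  have hlip : LipschitzWith 2 MMf := by
    apply LipschitzWith.of_dist_le_mul
    intro p q
    have h1 := MMf_le p q
    have h2 := MMf_le q p
    have d1 : |p.1 - q.1| ≤ dist p q := by
      rw [Prod.dist_eq, ← Real.dist_eq]; exact le_max_left _ _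
    have d2 : |p.2 - q.2| ≤ dist p q := by
      rw [Prod.dist_eq, ← Real.dist_eq]; exact le_max_right _ _
    have d1' : |q.1 - p.1| ≤ dist p q := by rw [abs_sub_comm]; exact d1
    have d2' : |q.2 - p.2| ≤ dist p q := by rw [abs_sub_comm]; exact d2
    rw [Real.dist_eq]
    push_cast
    rw [abs_sub_le_iff]
    constructor <;> linarith
  exact hlip.continuous

lemma deriv_comp_mul (f : ℝ → ℝ) (hf : Differentiable ℝ f) (c t : ℝ) :
    deriv (fun τ => f (c * τ)) t = c * deriv f (c * t) := by
  have h1 : HasDerivAt (fun τ : ℝ => c * τ) c t := by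
    simpa using (hasDerivAt_id t).const_mul c
  have h2 := (hf (c * t)).hasDerivAt.comp t h1
  rw [show (fun τ => f (c * τ)) = f ∘ (HMul.hMul c) from rfl, h2.deriv]; ring

lemma cd2 (f : ℝ → ℝ) (hf : ContDiff ℝ 2 f) :
    Differentiable ℝ f ∧ Differentiable ℝ (deriv f) ∧ Continuous (deriv (deriv f)) := by
  rw [show (2 : WithTop ℕ∞) = 1 + 1 by norm_num] at hf
  obtain ⟨hd, -, h1⟩ := contDiff_succ_iff_deriv.mp hf
  obtain ⟨hd2, hc⟩ := contDiff_one_iff_deriv.mp h1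
  exact ⟨hd, hd2, hc⟩

lemma deriv2_comp_mul (f : ℝ → ℝ) (hf : ContDiff ℝ 2 f) (c t : ℝ) :
    deriv (deriv (fun τ => f (c * τ))) t = c ^ 2 * deriv (deriv f) (c * t) := by
  obtain ⟨hd, hd2, -⟩ := cd2 f hf
  have e1 : deriv (fun τ => f (c * τ)) = fun τ => c * deriv f (c * τ) :=
    funext fun τ => deriv_comp_mul f hd c τ
  rw [e1, deriv_const_mul_field, deriv_comp_mul _ hd2 c t]; ring

lemma sInf_const_mul_image (c : ℝ) (hc : 0 ≤ c) (S : Set ℝ) :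
    sInf ((fun x => c * x) '' S) = c * sInf S := by
  have h : (fun x => c * x) '' S = c • S := by
    ext y; simp [Set.mem_smul_set, smul_eq_mul]
  rw [h, Real.sInf_smul_of_nonneg hc, smul_eq_mul]

theorem stmt19 (D : ℝ) (hD : 0 < D)
    (l a : ℝ → ℝ) (hl : ContDiff ℝ 2 l) (ha : ContDiff ℝ 2 a)
    (hlper : ∀ s : ℝ, l (s + 1) = l s) (haper : ∀ s : ℝ, a (s + 1) = a s)
    (hlpos : ∀ s : ℝ, 0 < l s)
    (I : ℝ → ℝ)
    (hI : ∀ ω : ℝ, 0 < ω →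
      I ω = (1 / (2 * π / ω)) * ∫ t in (0 : ℝ)..(2 * π / ω),
        (D * π ^ 2 / (l (ω * t / (2 * π))) ^ 2
          + (deriv (fun τ => a (ω * τ / (2 * π))) t) ^ 2 / (4 * D)
          + (-sInf ((fun η : ℝ =>
                η ^ 2 * deriv (deriv (fun τ => l (ω * τ / (2 * π)))) t
                    * l (ω * t / (2 * π)) / 2
                  + η * deriv (deriv (fun τ => a (ω * τ / (2 * π)))) t
                    * l (ω * t / (2 * π))) '' Icc (0 : ℝ) 1))
              / (2 * D))) :
    Tendsto I (nhdsWithin 0 (Ioi 0))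
        (nhds (∫ s in (0 : ℝ)..1, D * π ^ 2 / (l s) ^ 2)) ∧
      ∀ βhat r₂ : ℝ, βhat + (∫ s in (0 : ℝ)..1, D * π ^ 2 / (l s) ^ 2) < r₂ →
        ∀ᶠ ω in nhdsWithin 0 (Ioi 0), βhat + I ω ≤ r₂ := by
  have hπ := Real.pi_pos
  obtain ⟨hla, hld, hldd⟩ := cd2 l hl
  obtain ⟨haa, had, hadd⟩ := cd2 a ha
  set G : ℝ → ℝ := fun s => D * π ^ 2 / (l s) ^ 2 with hGdef
  set H : ℝ → ℝ := fun s => (deriv a s) ^ 2 / (4 * D)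
    + (- MMf (deriv (deriv l) s * l s, deriv (deriv a) s * l s)) / (2 * D) with hHdef
  set C₀ : ℝ := ∫ s in (0 : ℝ)..1, G s with hC0def
  set C₁ : ℝ := ∫ s in (0 : ℝ)..1, H s with hC1def
  have hGc : Continuous G :=
    continuous_const.div (hl.continuous.pow 2) (fun s => pow_ne_zero 2 (hlpos s).ne')
  have hHc : Continuous H := by
    have h1 : Continuous fun s =>
        MMf (deriv (deriv l) s * l s, deriv (deriv a) s * l s) :=
      MMf_continuous.comp ((hldd.mul hl.continuous).prodMk (hadd.mul hl.continuous))
    exact ((((had.continuous).pow 2).div_const _).add ((h1.neg).div_const _))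
  -- the key identity
  have key : ∀ ω : ℝ, 0 < ω → I ω = C₀ + (ω / (2 * π)) ^ 2 * C₁ := by
    intro ω hω
    set c : ℝ := ω / (2 * π) with hcdef
    have hc : 0 < c := div_pos hω (by linarith)
    have hc0 : c ≠ 0 := ne_of_gt hc
    have hfa : (fun τ => a (ω * τ / (2 * π))) = (fun τ => a (c * τ)) := by
      funext τ; congr 1; rw [hcdef]; ring
    have hfl : (fun τ => l (ω * τ / (2 * π))) = (fun τ => l (c * τ)) := by
      funext τ; congr 1; rw [hcdef]; ring
    have hpt : ∀ t : ℝ,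
        D * π ^ 2 / (l (ω * t / (2 * π))) ^ 2
          + (deriv (fun τ => a (ω * τ / (2 * π))) t) ^ 2 / (4 * D)
          + (-sInf ((fun η : ℝ =>
                η ^ 2 * deriv (deriv (fun τ => l (ω * τ / (2 * π)))) t
                    * l (ω * t / (2 * π)) / 2
                  + η * deriv (deriv (fun τ => a (ω * τ / (2 * π)))) t
                    * l (ω * t / (2 * π))) '' Icc (0 : ℝ) 1))
              / (2 * D)
        = (fun s => G s + c ^ 2 * H s) (c * t) := by
      intro t
      have hst : ω * t / (2 * π) = c * t := by rw [hcdef]; ring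
      have hA1 : deriv (fun τ => a (ω * τ / (2 * π))) t = c * deriv a (c * t) := by
        rw [hfa]; exact deriv_comp_mul a haa c t
      have hA2 : deriv (deriv (fun τ => a (ω * τ / (2 * π)))) t
          = c ^ 2 * deriv (deriv a) (c * t) := by
        rw [hfa]; exact deriv2_comp_mul a ha c t
      have hL2 : deriv (deriv (fun τ => l (ω * τ / (2 * π)))) t
          = c ^ 2 * deriv (deriv l) (c * t) := by
        rw [hfl]; exact deriv2_comp_mul l hl c t
      rw [hst, hA1, hA2, hL2]
      have hset : (fun η : ℝ =>
            η ^ 2 * (c ^ 2 * deriv (deriv l) (c * t)) * l (c * t) / 2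
              + η * (c ^ 2 * deriv (deriv a) (c * t)) * l (c * t))
          = (fun x => c ^ 2 * x) ∘ (fun η : ℝ =>
            η ^ 2 * (deriv (deriv l) (c * t) * l (c * t)) / 2
              + η * (deriv (deriv a) (c * t) * l (c * t))) := by
        funext η; simp only [Function.comp_apply]; ring
      rw [hset, Set.image_comp, sInf_const_mul_image _ (sq_nonneg c)]
      show D * π ^ 2 / (l (c * t)) ^ 2 + (c * deriv a (c * t)) ^ 2 / (4 * D)
          + -(c ^ 2 * MMf (deriv (deriv l) (c * t) * l (c * t),
              deriv (deriv a) (c * t) * l (c * t))) / (2 * D)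
        = G (c * t) + c ^ 2 * H (c * t)
      rw [hGdef, hHdef]
      ring
    rw [hI ω hω, intervalIntegral.integral_congr (g := fun t =>
        (fun s => G s + c ^ 2 * H s) (c * t)) (fun t _ => hpt t),
      intervalIntegral.integral_comp_mul_left (fun s => G s + c ^ 2 * H s) hc0]
    have hb1 : c * (2 * π / ω) = 1 := by
      rw [hcdef]; field_simp
    have hb0 : c * (0 : ℝ) = 0 := mul_zero c
    rw [hb1, hb0]
    have hsplit : (∫ x in (0:ℝ)..1, (G x + c ^ 2 * H x))
        = C₀ + c ^ 2 * C₁ := by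
      rw [intervalIntegral.integral_add (g := fun x => c ^ 2 * H x) (hGc.intervalIntegrable _ _)
        (((continuous_const.mul hHc : Continuous fun x => c ^ 2 * H x)).intervalIntegrable _ _),
        intervalIntegral.integral_const_mul]
    rw [hsplit, smul_eq_mul]
    have : (1 : ℝ) / (2 * π / ω) = c := by rw [hcdef]; field_simp
    rw [this]
    field_simp
  have htend : Tendsto I (nhdsWithin 0 (Ioi 0)) (nhds C₀) := by
    have hcont : Continuous fun ω : ℝ => C₀ + (ω / (2 * π)) ^ 2 * C₁ := by
      fun_prop
    have h0 : Tendsto (fun ω : ℝ => C₀ + (ω / (2 * π)) ^ 2 * C₁) (nhds 0)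
        (nhds C₀) := by
      have h := hcont.tendsto 0
      simpa using h
    refine Tendsto.congr' ?_ (h0.mono_left nhdsWithin_le_nhds)
    filter_upwards [self_mem_nhdsWithin] with ω hω
    exact (key ω hω).symm
  refine ⟨htend, ?_⟩
  intro βhat r₂ hlt
  have h2 : ∀ᶠ ω in nhdsWithin 0 (Ioi 0), I ω < r₂ - βhat :=
    htend.eventually_lt_const (by linarith)
  filter_upwards [h2] with ω h
  linarith
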